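/- Under the abstract factorization hypotheses, for all integers N ≥ n ≥ 0 and every f ∈ ker ℒ_n one has ‖ℛ_{N−1}ℛ_{N−2}⋯ℛ_n f‖²_{V_N} = [∏_{h=n}^{N−1} ∑_{k=n}^{h}(b_k − a_k)] · ‖f‖²_{V_n}; in particular, if the constant ∏_{h=n}^{N−1} ∑_{k=n}^{h}(b_k − a_k) is nonzero, then the linear map ker ℒ_n → V_N, f ↦ ℛ_{N−1}ℛ_{N−2}⋯ℛ_n f, is injective. -/

import Mathlib

open scoped ComplexInnerProductSpace

noncomputable section

variable {V : ℕ → Type*} [∀ N, NormedAddCommGroup (V N)] [∀ N, InnerProductSpace ℂ (V N)]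

/-- `RIter R n k` is the iterated raising operator
`ℛ_{n+k-1} ∘ ℛ_{n+k-2} ∘ ⋯ ∘ ℛ_n : V n → V (n+k)`. -/
def RIter (R : ∀ N, V N →ₗ[ℂ] V (N + 1)) (n : ℕ) : ∀ k : ℕ, V n →ₗ[ℂ] V (n + k)
  | 0 => LinearMap.id
  | k + 1 => (R (n + k)).comp (RIter R n k)

/-- `KerL L n f` says `ℒ_n f = 0`, with the convention `ℒ_0 = 0` (so that for `n = 0` every `f`
qualifies).  Here `L N = ℒ_{N+1}`. -/
def KerL (L : ∀ N, V (N + 1) →ₗ[ℂ] V N) : ∀ n : ℕ, V n → Prop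
  | 0, _ => True
  | m + 1, f => L m f = 0

/-- Under the abstract factorization hypotheses, for `N = n + k ≥ n ≥ 0` and every
`f ∈ ker ℒ_n` one has
`‖ℛ_{N-1}⋯ℛ_n f‖²_{V_N} = (∏_{h=n}^{N-1} ∑_{k'=n}^{h} (b_{k'} - a_{k'})) ‖f‖²_{V_n}`;
in particular, if the constant `∏_{h=n}^{N-1} ∑_{k'=n}^{h} (b_{k'} - a_{k'})` is nonzero, then
the map `ker ℒ_n → V N`, `f ↦ ℛ_{N-1}⋯ℛ_n f`, is injective. -/
theorem iterated_raising_norm_and_injective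
    [∀ N, FiniteDimensional ℂ (V N)]
    (hdim : ∀ N, Module.finrank ℂ (V N) = N + 1)
    (D : ∀ N, V N →ₗ[ℂ] V N) (hsym : ∀ N, (D N).IsSymmetric)
    (R : ∀ N, V N →ₗ[ℂ] V (N + 1)) (L : ∀ N, V (N + 1) →ₗ[ℂ] V N)
    (a b : ℕ → ℂ)
    (hAdj : ∀ (N : ℕ) (f₁ : V N) (f₂ : V (N + 1)), ⟪R N f₁, f₂⟫ = ⟪f₁, L N f₂⟫)
    (hRL : ∀ N : ℕ, (R N).comp (L N) = -(D (N + 1)) + a (N + 1) • LinearMap.id)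
    (hLR : ∀ N : ℕ, (L N).comp (R N) = -(D N) + b N • LinearMap.id)
    (hD0 : D 0 = a 0 • LinearMap.id)
    (n k : ℕ) :
    (∀ f : V n, KerL L n f →
        (‖RIter R n k f‖ : ℂ) ^ 2 =
          (∏ h ∈ Finset.Ico n (n + k), ∑ i ∈ Finset.Icc n h, (b i - a i)) * (‖f‖ : ℂ) ^ 2) ∧
    ((∏ h ∈ Finset.Ico n (n + k), ∑ i ∈ Finset.Icc n h, (b i - a i)) ≠ 0 →
      ∀ f g : V n, KerL L n f → KerL L n g → RIter R n k f = RIter R n k g → f = g) := by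

  classical
  -- base eigenvalue: `KerL` implies `D n f = a n • f`
  have hbase : ∀ f : V n, KerL L n f → D n f = a n • f := by
    intro f hf
    cases n with
    | zero =>
        rw [hD0]; simp
    | succ m =>
        have h := congrArg (fun T => T f) (hRL m)
        simp only [LinearMap.comp_apply, LinearMap.add_apply, LinearMap.neg_apply,
          LinearMap.smul_apply, LinearMap.id_apply] at h
        have hf' : L m f = 0 := hf
        rw [hf', map_zero] at h
        exact neg_add_eq_zero.mp h.symm
  -- eigenvalue propagation
  have eig : ∀ k' : ℕ, ∀ f : V n, D n f = a n • f →
      D (n + k') (RIter R n k' f)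
        = (a (n + k') - ∑ i ∈ Finset.Ico n (n + k'), (b i - a i)) • RIter R n k' f := by
    intro k'
    induction k' with
    | zero =>
        intro f hf
        simpa [RIter] using hf
    | succ k' ih =>
        intro f hf
        obtain ⟨μ, hμ⟩ : ∃ μ : ℂ, μ = a (n + k') - ∑ i ∈ Finset.Ico n (n + k'), (b i - a i) :=
          ⟨_, rfl⟩
        obtain ⟨g, hg⟩ : ∃ g : V (n + k'), g = RIter R n k' f := ⟨_, rfl⟩
        have hDg : D (n + k') g = μ • g := by rw [hμ, hg]; exact ih f hf
        have hLRg : L (n + k') (R (n + k') g) = (b (n + k') - μ) • g := by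
          have h := congrArg (fun T => T g) (hLR (n + k'))
          simp only [LinearMap.comp_apply, LinearMap.add_apply, LinearMap.neg_apply,
            LinearMap.smul_apply, LinearMap.id_apply] at h
          rw [h, hDg, sub_smul]
          abel
        have h2 := congrArg (fun T => T (R (n + k') g)) (hRL (n + k'))
        simp only [LinearMap.comp_apply, LinearMap.add_apply, LinearMap.neg_apply,
          LinearMap.smul_apply, LinearMap.id_apply] at h2
        rw [hLRg, map_smul] at h2
        have h3 : (b (n + k') - μ) • R (n + k') g + D (n + k' + 1) (R (n + k') g)
            = a (n + k' + 1) • R (n + k') g := by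
          rw [h2]; abel
        have h4 : D (n + k' + 1) (R (n + k') g)
            = (a (n + k' + 1) - (b (n + k') - μ)) • R (n + k') g := by
          rw [sub_smul]
          exact eq_sub_of_add_eq' h3
        have hiter : RIter R n (k' + 1) f = R (n + k') g := by rw [hg]; rfl
        show D (n + k' + 1) (RIter R n (k' + 1) f)
          = (a (n + k' + 1) - ∑ i ∈ Finset.Ico n (n + k' + 1), (b i - a i))
              • RIter R n (k' + 1) f
        rw [hiter, h4]
        congr 1
        rw [hμ, Finset.sum_Ico_succ_top (Nat.le_add_right n k')]
        ring
  -- squared norms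
  have hnorm : ∀ k' : ℕ, ∀ f : V n, D n f = a n • f →
      (inner ℂ (RIter R n k' f) (RIter R n k' f) : ℂ)
        = (∏ h ∈ Finset.Ico n (n + k'), ∑ i ∈ Finset.Icc n h, (b i - a i))
            * (inner ℂ f f : ℂ) := by
    intro k'
    induction k' with
    | zero =>
        intro f hf
        simp [RIter]
    | succ k' ih =>
        intro f hf
        obtain ⟨μ, hμ⟩ : ∃ μ : ℂ, μ = a (n + k') - ∑ i ∈ Finset.Ico n (n + k'), (b i - a i) :=
          ⟨_, rfl⟩
        obtain ⟨g, hg⟩ : ∃ g : V (n + k'), g = RIter R n k' f := ⟨_, rfl⟩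
        have hDg : D (n + k') g = μ • g := by rw [hμ, hg]; exact eig k' f hf
        have hLRg : L (n + k') (R (n + k') g) = (b (n + k') - μ) • g := by
          have h := congrArg (fun T => T g) (hLR (n + k'))
          simp only [LinearMap.comp_apply, LinearMap.add_apply, LinearMap.neg_apply,
            LinearMap.smul_apply, LinearMap.id_apply] at h
          rw [h, hDg, sub_smul]
          abel
        have hiter : RIter R n (k' + 1) f = R (n + k') g := by rw [hg]; rfl
        have step : (inner ℂ (RIter R n (k' + 1) f) (RIter R n (k' + 1) f) : ℂ)
            = (∑ i ∈ Finset.Icc n (n + k'), (b i - a i)) * (inner ℂ g g : ℂ) := by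
          rw [hiter, hAdj, hLRg, inner_smul_right]
          congr 1
          rw [← Finset.Ico_add_one_right_eq_Icc, Finset.sum_Ico_succ_top (Nat.le_add_right n k'), hμ]
          ring
        show (inner ℂ (RIter R n (k' + 1) f) (RIter R n (k' + 1) f) : ℂ)
          = (∏ h ∈ Finset.Ico n (n + k' + 1), ∑ i ∈ Finset.Icc n h, (b i - a i))
              * (inner ℂ f f : ℂ)
        rw [step, hg, ih f hf, Finset.prod_Ico_succ_top (Nat.le_add_right n k')]
        ring
  have main : ∀ f : V n, KerL L n f →
      (‖RIter R n k f‖ : ℂ) ^ 2 =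
        (∏ h ∈ Finset.Ico n (n + k), ∑ i ∈ Finset.Icc n h, (b i - a i)) * (‖f‖ : ℂ) ^ 2 := by
    intro f hf
    have := hnorm k f (hbase f hf)
    rwa [inner_self_eq_norm_sq_to_K, inner_self_eq_norm_sq_to_K] at this
  refine ⟨main, ?_⟩
  intro hne f g hf hg heq
  have hsub : KerL L n (f - g) := by
    cases n with
    | zero => trivial
    | succ m =>
        have hf' : L m f = 0 := hf
        have hg' : L m g = 0 := hg
        show L m (f - g) = 0
        rw [map_sub, hf', hg', sub_zero]
  have h0 : RIter R n k (f - g) = 0 := by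
    rw [map_sub, heq, sub_self]
  have hmain := main (f - g) hsub
  rw [h0, norm_zero] at hmain
  have hmain' : (∏ h ∈ Finset.Ico n (n + k), ∑ i ∈ Finset.Icc n h, (b i - a i))
      * (‖f - g‖ : ℂ) ^ 2 = 0 := by
    rw [← hmain]; norm_num
  have hz : (‖f - g‖ : ℂ) ^ 2 = 0 := by
    rcases mul_eq_zero.mp hmain' with h | h
    · exact absurd h hne
    · exact h
  have h1 : ‖f - g‖ = 0 := by
    have := pow_eq_zero_iff (n := 2) (by norm_num) |>.mp hz
    exact_mod_cast this
  have : f - g = 0 := norm_eq_zero.mp h1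
  exact sub_eq_zero.mp this
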